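/- Let 𝔤 be a finite-dimensional real Lie algebra, 𝔲 an abelian ad-unipotent subalgebra, and suppose 𝔤 decomposes as 𝔤 = ⊕ᵢ 𝔤ᵢ where 𝔤ᵢ ⊆ 𝔤̃ᵢ is complementary to 𝔤̃_{i−1}. For U ∈ 𝔲 and X ∈ 𝔤_ℓ, and πᵢ : 𝔤 → 𝔤ᵢ the projection, the map s ↦ πᵢ(exp(ad_{s₁U₁ + ⋯ + s_kU_k})(X)) is a polynomial map in (s₁,…,s_k) of degree at most max{ℓ − i, 0}, with coefficients depending linearly on X. -/

import Mathlib

/-- Controlled polynomial divergence: for `X ∈ 𝔤_ℓ`, the map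
`s ↦ πᵢ (exp(ad_{s₁ U₁ + ⋯ + s_k U_k}) X)` is a polynomial map in `s` of degree
at most `max (ℓ - i) 0` whose coefficients depend linearly on `X`.  Here `u` is
an abelian subalgebra whose elements `W` satisfy `(ad_W)^{dim 𝔤} = 0`
(ad-unipotency), so that the exponential is the truncated series; the spaces
`g' i` are contained in the filtration step `𝔤̃ᵢ`, and the projection `πᵢ`
kills every lower filtration step `𝔤̃_{i'}`, `i' < i`. -/
theorem stmt11 (L : Type*) [LieRing L] [LieAlgebra ℝ L] [FiniteDimensional ℝ L]
    (u : LieSubalgebra ℝ L)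
    (hu_ab : ∀ x ∈ u, ∀ y ∈ u, ⁅x, y⁆ = 0)
    (hu_nil : ∀ W ∈ u, (LieAlgebra.ad ℝ L W) ^ (Module.finrank ℝ L) = 0)
    (k : ℕ) (U : Fin k → L) (hU : ∀ j, U j ∈ u)
    (g' : ℕ → Submodule ℝ L)
    (hg' : ∀ i : ℕ, ∀ X ∈ g' i, ∀ V : Fin (i + 1) → L, (∀ j, V j ∈ u) →
      (List.ofFn fun j => LieAlgebra.ad ℝ L (V j)).prod X = 0)
    (π : ℕ → L →ₗ[ℝ] L)
    (hπker : ∀ i i' : ℕ, i' < i → ∀ X : L,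
      (∀ V : Fin (i' + 1) → L, (∀ j, V j ∈ u) →
        (List.ofFn fun j => LieAlgebra.ad ℝ L (V j)).prod X = 0) → π i X = 0)
    (i ℓ : ℕ) :
    ∃ (D : Finset (Fin k →₀ ℕ)) (c : (Fin k →₀ ℕ) → L →ₗ[ℝ] L),
      (∀ μ ∈ D, (μ.sum fun _ e => e) ≤ ℓ - i) ∧
      ∀ X ∈ g' ℓ, ∀ s : Fin k → ℝ,
        π i ((∑ t ∈ Finset.range (Module.finrank ℝ L),
            ((t.factorial : ℝ)⁻¹) • (LieAlgebra.ad ℝ L (∑ j, s j • U j)) ^ t) X) =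
          ∑ μ ∈ D, (∏ j, s j ^ μ j) • c μ X := by
  classical
  set N := Module.finrank ℝ L with hN
  set Ad : L → Module.End ℝ L := fun x => LieAlgebra.ad ℝ L x with hAd
  -- hg' in list form
  have hg'' : ∀ X ∈ g' ℓ, ∀ l : List L, (∀ x ∈ l, x ∈ u) → l.length = ℓ + 1 →
      (l.map Ad).prod X = 0 := by
    intro X hX l hmem hlen
    have hV : ∀ j : Fin (ℓ + 1), l.getD (j : ℕ) 0 ∈ u := by
      intro j
      have hj : (j : ℕ) < l.length := by omega
      rw [List.getD_eq_getElem l 0 hj]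
      exact hmem _ (List.getElem_mem hj)
    have := hg' ℓ X hX (fun j => l.getD (j : ℕ) 0) hV
    have heq : (List.ofFn fun j : Fin (ℓ + 1) => Ad (l.getD (j : ℕ) 0)) = l.map Ad := by
      apply List.ext_getElem
      · simp [hlen]
      · intro n h1 h2
        have hn : n < l.length := by rw [List.length_map] at h2; omega
        rw [List.getElem_ofFn, List.getElem_map]
        simp [List.getD_eq_getElem l 0 hn, List.getElem?_eq_getElem hn]
    rw [← heq]
    exact this
  -- Lemma A : products of length ≥ ℓ+1 kill X
  have lemA : ∀ X ∈ g' ℓ, ∀ l : List L, (∀ x ∈ l, x ∈ u) → ℓ + 1 ≤ l.length →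
      (l.map Ad).prod X = 0 := by
    intro X hX l
    induction l with
    | nil => intro _ h; simp at h
    | cons a l ih =>
      intro hmem hlen
      by_cases hl : ℓ + 1 ≤ l.length
      · have h0 := ih (fun x hx => hmem x (List.mem_cons_of_mem _ hx)) hl
        simp only [List.map_cons, List.prod_cons, Module.End.mul_apply, h0, map_zero]
      · have hlen' : (a :: l).length = ℓ + 1 := by simp at hlen ⊢; omega
        exact hg'' X hX _ hmem hlen'
  -- Lemma B : π i kills products of length > ℓ - i applied to X
  have lemB : ∀ X ∈ g' ℓ, ∀ l : List L, (∀ x ∈ l, x ∈ u) → ℓ - i < l.length →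
      π i ((l.map Ad).prod X) = 0 := by
    intro X hX l hmem hlen
    by_cases hl : ℓ + 1 ≤ l.length
    · rw [lemA X hX l hmem hl, map_zero]
    · push_neg at hl
      apply hπker i (ℓ - l.length) (by omega)
      intro V hV
      have hof : (List.ofFn fun j => LieAlgebra.ad ℝ L (V j)) = (List.ofFn V).map Ad := by
        rw [List.map_ofFn]; rfl
      rw [hof, ← Module.End.mul_apply, ← List.prod_append, ← List.map_append]
      refine lemA X hX _ ?_ ?_
      · intro x hx
        rcases List.mem_append.1 hx with h | h
        · obtain ⟨j, rfl⟩ := List.mem_ofFn.1 h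
          exact hV j
        · exact hmem x h
      · simp only [List.length_append, List.length_ofFn]
        omega
  -- Lemma C : multinomial-style expansion of the power
  have lemC : ∀ (t : ℕ) (s : Fin k → ℝ),
      ((∑ j, s j • Ad (U j)) ^ t : Module.End ℝ L) =
      ∑ f : Fin t → Fin k, (∏ m, s (f m)) •
        ((List.ofFn f).map fun j => Ad (U j)).prod := by
    intro t s
    induction t with
    | zero => simp
    | succ t ih =>
      rw [pow_succ', ih, Finset.mul_sum]
      rw [← ((Fin.consEquiv (fun _ : Fin (t + 1) => Fin k)).sum_comp
        (fun f => (∏ m, s (f m)) • ((List.ofFn f).map fun j => Ad (U j)).prod))]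
      rw [Fintype.sum_prod_type]
      rw [Finset.sum_comm]
      refine Finset.sum_congr rfl fun f _ => ?_
      rw [Finset.sum_mul]
      refine Finset.sum_congr rfl fun j _ => ?_
      have h1 : (Fin.consEquiv (fun _ : Fin (t + 1) => Fin k)) (j, f) = Fin.cons j f := rfl
      rw [h1]
      have h2 : (∏ m : Fin (t + 1), s ((Fin.cons j f : Fin (t + 1) → Fin k) m)) = s j * ∏ m, s (f m) := by
        rw [Fin.prod_univ_succ]
        simp [Fin.cons_zero, Fin.cons_succ]
      have h3 : (List.ofFn (Fin.cons j f : Fin (t + 1) → Fin k)) = j :: List.ofFn f := by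
        rw [List.ofFn_succ]
        simp [Fin.cons_zero, Fin.cons_succ]
      rw [h2, h3, List.map_cons, List.prod_cons, smul_mul_assoc, mul_smul_comm, smul_smul]
  -- Lemma D : total degree of the monomial of f is t
  have lemD : ∀ (t : ℕ) (f : Fin t → Fin k),
      ((∑ m, Finsupp.single (f m) 1 : Fin k →₀ ℕ).sum fun _ e => e) = t := by
    intro t f
    rw [Finsupp.sum_fintype _ _ (fun _ => rfl)]
    simp only [Finset.sum_apply', Finsupp.single_apply]
    rw [Finset.sum_comm]
    simp
  -- Lemma E : the monomial as a product of powers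
  have lemE : ∀ (t : ℕ) (f : Fin t → Fin k) (s : Fin k → ℝ),
      (∏ j, s j ^ ((∑ m, Finsupp.single (f m) 1 : Fin k →₀ ℕ) j)) = ∏ m, s (f m) := by
    intro t f s
    simp only [Finset.sum_apply', Finsupp.single_apply]
    simp only [← Finset.prod_pow_eq_pow_sum]
    rw [Finset.prod_comm]
    refine Finset.prod_congr rfl fun m _ => ?_
    simp [pow_ite, Finset.prod_ite_eq]
  -- the building blocks
  set P : (Σ t : ℕ, (Fin t → Fin k)) → Module.End ℝ L :=
    fun p => ((List.ofFn p.2).map fun j => Ad (U j)).prod with hP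
  set mon : (Σ t : ℕ, (Fin t → Fin k)) → (Fin k →₀ ℕ) :=
    fun p => ∑ m, Finsupp.single (p.2 m) 1 with hmon
  set S : Finset (Σ t : ℕ, (Fin t → Fin k)) :=
    (Finset.range N).sigma fun _ => Finset.univ with hS
  refine ⟨(S.image mon).filter fun μ => (μ.sum fun _ e => e) ≤ ℓ - i,
    fun μ => ∑ p ∈ S.filter (fun p => mon p = μ),
      ((p.1.factorial : ℝ)⁻¹) • ((π i) ∘ₗ (P p)), ?_, ?_⟩
  · intro μ hμ
    exact (Finset.mem_filter.1 hμ).2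
  · intro X hX s
    have hπP : ∀ (p : Σ t : ℕ, (Fin t → Fin k)), ℓ - i < p.1 → π i (P p X) = 0 := by
      intro p hp
      have hPp : P p X = (((List.ofFn p.2).map U).map Ad).prod X := by
        rw [List.map_map]; rfl
      rw [hPp]
      refine lemB X hX _ ?_ ?_
      · intro x hx
        obtain ⟨j, _, rfl⟩ := List.mem_map.1 hx
        exact hU j
      · simpa using hp
    have had : LieAlgebra.ad ℝ L (∑ j, s j • U j) = ∑ j, s j • Ad (U j) := by
      rw [map_sum]
      simp only [map_smul, hAd]
    rw [LinearMap.sum_apply, map_sum]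
    have step : ∀ t ∈ Finset.range N,
        π i ((((t.factorial : ℝ)⁻¹) • (LieAlgebra.ad ℝ L (∑ j, s j • U j)) ^ t) X)
          = ∑ f : Fin t → Fin k,
              (((t.factorial : ℝ)⁻¹) * ∏ m, s (f m)) • π i (P ⟨t, f⟩ X) := by
      intro t _
      rw [had, LinearMap.smul_apply, map_smul, lemC t s, LinearMap.sum_apply, map_sum,
        Finset.smul_sum]
      refine Finset.sum_congr rfl fun f _ => ?_
      rw [LinearMap.smul_apply, map_smul, smul_smul]
    rw [Finset.sum_congr rfl step, Finset.sum_sigma']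
    have hvanish : (∑ p ∈ S.filter (fun p => ((mon p).sum fun _ e => e) ≤ ℓ - i),
          (((p.1.factorial : ℝ)⁻¹) * ∏ m, s (p.2 m)) • π i (P p X))
        = ∑ p ∈ S, (((p.1.factorial : ℝ)⁻¹) * ∏ m, s (p.2 m)) • π i (P p X) := by
      refine Finset.sum_filter_of_ne ?_
      intro p _ hne
      by_contra hq
      apply hne
      rw [hπP p ?_, smul_zero]
      have hd : ((mon p).sum fun _ e => e) = p.1 := lemD p.1 p.2
      omega
    rw [← hvanish]
    rw [← Finset.sum_fiberwise_of_maps_to (g := mon)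
      (t := (S.image mon).filter fun μ => (μ.sum fun _ e => e) ≤ ℓ - i) ?_
      (fun p => (((p.1.factorial : ℝ)⁻¹) * ∏ m, s (p.2 m)) • π i (P p X))]
    · refine Finset.sum_congr rfl fun μ hμ => ?_
      have hμle : (μ.sum fun _ e => e) ≤ ℓ - i := (Finset.mem_filter.1 hμ).2
      have hfe : (S.filter fun p => ((mon p).sum fun _ e => e) ≤ ℓ - i).filter
            (fun p => mon p = μ) = S.filter (fun p => mon p = μ) := by
        ext p
        simp only [Finset.mem_filter]
        constructor
        · rintro ⟨⟨h1, _⟩, h3⟩; exact ⟨h1, h3⟩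
        · rintro ⟨h1, h3⟩; exact ⟨⟨h1, h3 ▸ hμle⟩, h3⟩
      rw [hfe, LinearMap.sum_apply, Finset.smul_sum]
      refine Finset.sum_congr rfl fun p hp => ?_
      have hmonp : mon p = μ := (Finset.mem_filter.1 hp).2
      rw [LinearMap.smul_apply, LinearMap.comp_apply, smul_smul]
      have hprod : (∏ j, s j ^ μ j) = ∏ m, s (p.2 m) := by
        rw [← hmonp]; exact lemE p.1 p.2 s
      rw [hprod, mul_comm]
    · intro p hp
      refine Finset.mem_filter.2 ⟨Finset.mem_image_of_mem mon (Finset.mem_filter.1 hp).1,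
        (Finset.mem_filter.1 hp).2⟩
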